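/- arXiv:2009.01201 — 2 statements merged into one kernel-verified Lean document; each statement's English description precedes it below -/
import Mathlib

section
/- The vector v_D satisfies (rec f)(-v_D) + (rec g)(-v_D) = -‖v_D‖², where rec f and rec g are the recession functions of f and g. -/
open scoped InnerProductSpace Pointwise Classical
open Filter Topology

noncomputable section

variable {H : Type*} [NormedAddCommGroup H] [InnerProductSpace ℝ H]

/-- The effective domain of an extended-real-valued function. -/
def fdom {α : Type*} (f : α → EReal) : Set α := {x | f x ≠ ⊤}

/-- The Fenchel conjugate `f*(u) = sup_x (⟪x, u⟫ - f x)`. -/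
def fconj (f : H → EReal) : H → EReal :=
  fun u => ⨆ x : H, ((⟪x, u⟫_ℝ : ℝ) : EReal) - f x

/-- The recession function `(rec f)(y) = sup_{x ∈ dom f} (f (x + y) - f x)`. -/
def recFn (f : H → EReal) : H → EReal :=
  fun y => ⨆ x ∈ fdom f, (f (x + y) - f x)

/-- A proper function: never `-∞` and not identically `+∞`. -/
def ProperFn {α : Type*} (f : α → EReal) : Prop := (∀ x, f x ≠ ⊥) ∧ ∃ x, f x ≠ ⊤

/-- Convexity of an extended-real-valued function, via convexity of its epigraph. -/
def ConvexFn (f : H → EReal) : Prop :=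
  Convex ℝ {p : H × ℝ | f p.1 ≤ (p.2 : EReal)}

/-- `v` is the element of minimum norm of `S`, i.e. `v = P_S 0`, the metric
projection of `0` onto `S`. -/
def IsMinNormPoint (S : Set H) (v : H) : Prop := v ∈ S ∧ ∀ w ∈ S, ‖v‖ ≤ ‖w‖

/-- `p` is the metric projection of `x` onto `S`, i.e. `p = P_S x`. -/
def IsProjOn (S : Set H) (x p : H) : Prop := p ∈ S ∧ ∀ w ∈ S, dist x p ≤ dist x w

/-- The polar cone `S° = {u | ∀ x ∈ S, ⟪x, u⟫ ≤ 0}`. -/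
def polarCone (s : Set H) : Set H := {u | ∀ x ∈ s, ⟪x, u⟫_ℝ ≤ 0}

/-- The recession cone `rec S = {x | ∀ y ∈ S, x + y ∈ S}`. -/
def recCone (s : Set H) : Set H := {x | ∀ y ∈ s, x + y ∈ s}

/-- `p = prox_f w`: `p` minimizes `y ↦ f y + ½‖y - w‖²`. -/
def IsProxOf (f : H → EReal) (w p : H) : Prop :=
  ∀ y : H, f p + ((1 / 2 * ‖p - w‖ ^ 2 : ℝ) : EReal) ≤ f y + ((1 / 2 * ‖y - w‖ ^ 2 : ℝ) : EReal)

lemma sub_le_coe_iff {a : EReal} {x c : ℝ} : ((x:ℝ):EReal) - a ≤ (c:EReal) ↔ (x:EReal) ≤ (c:EReal) + a :=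
  EReal.sub_le_iff_le_add (Or.inr (EReal.coe_ne_top c)) (Or.inr (EReal.coe_ne_bot c))

lemma fconj_ne_bot {f : H → EReal} (hf : ProperFn f) (u : H) : fconj f u ≠ ⊥ := by
  obtain ⟨x₀, hx₀⟩ := hf.2
  have hb := hf.1 x₀
  have h1 : ((⟪x₀, u⟫_ℝ : ℝ) : EReal) - f x₀ ≤ fconj f u := le_iSup (fun x => ((⟪x, u⟫_ℝ : ℝ) : EReal) - f x) x₀
  intro h
  rw [h, le_bot_iff] at h1
  rw [← EReal.coe_toReal hx₀ hb, ← EReal.coe_sub] at h1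
  exact EReal.coe_ne_bot _ h1

/-- From `u ∈ dom f*`, an affine minorant of `f`. -/
lemma minorant_of_mem_fdom {f : H → EReal} (hf : ProperFn f) {u : H} (hu : fconj f u ≠ ⊤) :
    ∃ c : ℝ, ∀ x, ((⟪x, u⟫_ℝ : ℝ) : EReal) ≤ (c : EReal) + f x := by
  refine ⟨(fconj f u).toReal, fun x => ?_⟩
  have h1 : ((⟪x, u⟫_ℝ : ℝ) : EReal) - f x ≤ fconj f u := le_iSup (fun x => ((⟪x, u⟫_ℝ : ℝ) : EReal) - f x) x
  rw [← EReal.coe_toReal hu (fconj_ne_bot hf u)] at h1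
  exact sub_le_coe_iff.1 h1

lemma fconj_le_of_minorant {f : H → EReal} {u : H} {c : ℝ}
    (h : ∀ x, ((⟪x, u⟫_ℝ : ℝ) : EReal) ≤ (c : EReal) + f x) : fconj f u ≤ (c : EReal) :=
  iSup_le fun x => sub_le_coe_iff.2 (h x)

lemma separation_core {f : H → EReal} [FiniteDimensional ℝ H]
    (hf_prop : ProperFn f) (hf_lsc : LowerSemicontinuous f) (hf_cvx : ConvexFn f)
    {z : H} {β : ℝ} (hz : ¬ f z ≤ (β : EReal)) :
    ∃ (w : H) (s c : ℝ), 0 ≤ s ∧ ⟪z, w⟫_ℝ + s * β < c ∧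
      ∀ x (t : ℝ), f x ≤ (t : EReal) → c < ⟪x, w⟫_ℝ + s * t := by
  have hcl : IsClosed {p : H × ℝ | f p.1 ≤ (p.2 : EReal)} := by
    have h := hf_lsc.isClosed_epigraph
    have he : {p : H × ℝ | f p.1 ≤ (p.2 : EReal)} =
        (fun p : H × ℝ => ((p.1, (p.2 : EReal)) : H × EReal)) ⁻¹' {p : H × EReal | f p.1 ≤ p.2} := rfl
    rw [he]
    exact h.preimage (continuous_fst.prodMk (continuous_coe_real_ereal.comp continuous_snd))
  have hzm : ((z, β) : H × ℝ) ∉ {p : H × ℝ | f p.1 ≤ (p.2 : EReal)} := hz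
  obtain ⟨φ, c, hφz, hφC⟩ := geometric_hahn_banach_point_closed hf_cvx hcl hzm
  obtain ⟨w, hw⟩ : ∃ w : H, ∀ x, ⟪x, w⟫_ℝ = φ (x, 0) := by
    refine ⟨(InnerProductSpace.toDual ℝ H).symm (φ.comp (ContinuousLinearMap.inl ℝ H ℝ)), fun x => ?_⟩
    rw [real_inner_comm]
    exact InnerProductSpace.toDual_symm_apply
  set s : ℝ := φ (0, 1) with hsdef
  have hdecomp : ∀ (x : H) (t : ℝ), φ (x, t) = ⟪x, w⟫_ℝ + s * t := by
    intro x t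
    have h1 : (x, t) = (x, 0) + t • ((0 : H), (1 : ℝ)) := by
      simp [Prod.ext_iff]
    rw [h1, map_add, map_smul, smul_eq_mul, hw, mul_comm]
  have hC : ∀ (x : H) (t : ℝ), f x ≤ (t : EReal) → c < ⟪x, w⟫_ℝ + s * t := by
    intro x t ht
    have := hφC (x, t) ht
    rwa [hdecomp] at this
  obtain ⟨x₀, hx₀⟩ := hf_prop.2
  have hx₀r : f x₀ = (((f x₀).toReal : ℝ) : EReal) := (EReal.coe_toReal hx₀ (hf_prop.1 x₀)).symm
  have hs : 0 ≤ s := by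
    by_contra hneg
    push_neg at hneg
    set t : ℝ := max (f x₀).toReal ((c - ⟪x₀, w⟫_ℝ) / s) with htdef
    have h1 : f x₀ ≤ (t : EReal) := by
      rw [hx₀r]
      exact_mod_cast le_max_left _ _
    have h2 := hC x₀ t h1
    have h3 : (c - ⟪x₀, w⟫_ℝ) / s ≤ t := le_max_right _ _
    have h4 : s * t ≤ s * ((c - ⟪x₀, w⟫_ℝ) / s) := mul_le_mul_of_nonpos_left h3 hneg.le
    rw [mul_div_cancel₀ _ hneg.ne] at h4
    linarith
  refine ⟨w, s, c, hs, ?_, hC⟩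
  have := hφz
  rwa [hdecomp] at this

lemma conj_bound_of_sep {f : H → EReal} (hf_prop : ProperFn f) {w : H} {s c : ℝ} (hspos : 0 < s)
    (hC : ∀ x (t : ℝ), f x ≤ (t : EReal) → c < ⟪x, w⟫_ℝ + s * t) :
    fconj f ((-s⁻¹) • w) ≤ ((-(c * s⁻¹) : ℝ) : EReal) := by
  apply iSup_le
  intro x
  rcases eq_or_ne (f x) ⊤ with hfx | hfx
  · rw [hfx, EReal.sub_top]
    exact bot_le
  · set t := (f x).toReal with htd
    have hfx' : f x = ((t : ℝ) : EReal) := (EReal.coe_toReal hfx (hf_prop.1 x)).symm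
    have h := hC x t (le_of_eq hfx')
    rw [hfx', ← EReal.coe_sub, EReal.coe_le_coe_iff, real_inner_smul_right]
    have hsi : 0 < s⁻¹ := inv_pos.2 hspos
    have h2 := mul_lt_mul_of_pos_left h hsi
    have h4 : s⁻¹ * (⟪x, w⟫_ℝ + s * t) = s⁻¹ * ⟪x, w⟫_ℝ + t := by
      field_simp
    nlinarith [h2, h4]

lemma fdom_fconj_nonempty {f : H → EReal} [FiniteDimensional ℝ H]
    (hf_prop : ProperFn f) (hf_lsc : LowerSemicontinuous f) (hf_cvx : ConvexFn f) :
    ∃ u, fconj f u ≠ ⊤ := by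
  obtain ⟨x₀, hx₀⟩ := hf_prop.2
  set r₀ := (f x₀).toReal with hr₀
  have hx₀r : f x₀ = ((r₀ : ℝ) : EReal) := (EReal.coe_toReal hx₀ (hf_prop.1 x₀)).symm
  have hz : ¬ f x₀ ≤ ((r₀ - 1 : ℝ) : EReal) := by
    rw [hx₀r, EReal.coe_le_coe_iff]
    linarith
  obtain ⟨w, s, c, hs, hlt, hC⟩ := separation_core hf_prop hf_lsc hf_cvx hz
  have h1 := hC x₀ r₀ (le_of_eq hx₀r)
  have hspos : 0 < s := by
    rcases hs.lt_or_eq with h | h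
    · exact h
    · exfalso
      rw [← h] at hlt h1
      simp only [zero_mul, add_zero] at hlt h1
      linarith
  refine ⟨(-s⁻¹) • w, fun htop => ?_⟩
  have := conj_bound_of_sep hf_prop hspos hC
  rw [htop] at this
  exact (EReal.coe_ne_top _) (top_le_iff.1 this)

lemma recFn_le_of_bound {f : H → EReal} [FiniteDimensional ℝ H]
    (hf_prop : ProperFn f) (hf_lsc : LowerSemicontinuous f) (hf_cvx : ConvexFn f)
    {y : H} {M : ℝ} (hM : ∀ u, fconj f u ≠ ⊤ → ⟪y, u⟫_ℝ ≤ M) :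
    recFn f y ≤ (M : EReal) := by
  refine iSup₂_le fun x hx => ?_
  set ρ := (f x).toReal with hρ
  have hxr : f x = ((ρ : ℝ) : EReal) := (EReal.coe_toReal hx (hf_prop.1 x)).symm
  have key : f (x + y) ≤ ((M + ρ : ℝ) : EReal) := by
    by_contra hz
    obtain ⟨w, s, c, hs, hlt, hC⟩ := separation_core hf_prop hf_lsc hf_cvx hz
    have h2 := hC x ρ (le_of_eq hxr)
    rw [inner_add_left] at hlt
    rcases hs.lt_or_eq with hspos | hs0
    · -- s > 0 : build a conjugate-domain point contradicting hM
      have hu := conj_bound_of_sep hf_prop hspos hC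
      have hum : fconj f ((-s⁻¹) • w) ≠ ⊤ := fun htop => by
        rw [htop] at hu
        exact (EReal.coe_ne_top _) (top_le_iff.1 hu)
      have hyu := hM _ hum
      rw [real_inner_smul_right] at hyu
      -- hlt : ⟪x,w⟫ + ⟪y,w⟫ + s*(M+ρ) < c ; h2 : c < ⟪x,w⟫ + s*ρ
      -- hence ⟪y,w⟫ + s*M < 0, so -s⁻¹ * ⟪y,w⟫ > M, contradiction with hyu
      have h5 : ⟪y, w⟫_ℝ + s * M < 0 := by nlinarith
      have h6 := mul_le_mul_of_nonneg_left hyu hspos.le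
      have h7 : s * (-s⁻¹ * ⟪y, w⟫_ℝ) = -⟪y, w⟫_ℝ := by
        field_simp
      rw [h7] at h6
      linarith
    · -- s = 0
      rw [← hs0] at hlt hC h2
      simp only [zero_mul, add_zero] at hlt hC h2
      have hyw : ⟪y, w⟫_ℝ < 0 := by linarith
      obtain ⟨u₀, hu₀⟩ := fdom_fconj_nonempty hf_prop hf_lsc hf_cvx
      obtain ⟨c₀, hc₀⟩ := minorant_of_mem_fdom hf_prop hu₀
      set lam : ℝ := max 0 ((M - ⟪y, u₀⟫_ℝ) / (-⟪y, w⟫_ℝ) + 1) with hlam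
      have hlam0 : 0 ≤ lam := le_max_left _ _
      have hconj : fconj f (u₀ - lam • w) ≤ ((c₀ - lam * c : ℝ) : EReal) := by
        apply iSup_le
        intro x'
        rcases eq_or_ne (f x') ⊤ with hfx' | hfx'
        · rw [hfx', EReal.sub_top]; exact bot_le
        · have hfr : f x' = (((f x').toReal : ℝ) : EReal) :=
            (EReal.coe_toReal hfx' (hf_prop.1 x')).symm
          set t := (f x').toReal
          have ha := hc₀ x'
          rw [hfr, ← EReal.coe_add, EReal.coe_le_coe_iff] at ha
          have hb := hC x' t (le_of_eq hfr)
          rw [hfr, ← EReal.coe_sub, EReal.coe_le_coe_iff, inner_sub_right,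
            real_inner_smul_right]
          nlinarith [mul_le_mul_of_nonneg_left hb.le hlam0]
      have hum : fconj f (u₀ - lam • w) ≠ ⊤ := fun htop => by
        rw [htop] at hconj
        exact (EReal.coe_ne_top _) (top_le_iff.1 hconj)
      have hyu := hM _ hum
      rw [inner_sub_right, real_inner_smul_right] at hyu
      -- lam * (-⟪y,w⟫) > M - ⟪y,u₀⟫
      have hpos : 0 < -⟪y, w⟫_ℝ := by linarith
      have hge : (M - ⟪y, u₀⟫_ℝ) / (-⟪y, w⟫_ℝ) + 1 ≤ lam := le_max_right _ _
      have h7 : ((M - ⟪y, u₀⟫_ℝ) / (-⟪y, w⟫_ℝ) + 1) * (-⟪y, w⟫_ℝ) ≤ lam * (-⟪y, w⟫_ℝ) :=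
        mul_le_mul_of_nonneg_right hge hpos.le
      rw [add_mul, div_mul_cancel₀ _ hpos.ne'] at h7
      linarith
  rw [hxr]
  rw [EReal.sub_le_iff_le_add (Or.inr (EReal.coe_ne_top M)) (Or.inr (EReal.coe_ne_bot M))]
  rwa [EReal.coe_add] at key

lemma inner_le_recFn {f : H → EReal} (hf_prop : ProperFn f) {u : H} (hu : fconj f u ≠ ⊤)
    (y : H) : ((⟪y, u⟫_ℝ : ℝ) : EReal) ≤ recFn f y := by
  obtain ⟨c, hc⟩ := minorant_of_mem_fdom hf_prop hu
  obtain ⟨x₀, hx₀⟩ := hf_prop.2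
  set ρ₀ := (f x₀).toReal with hρ₀
  have hx₀r : f x₀ = ((ρ₀ : ℝ) : EReal) := (EReal.coe_toReal hx₀ (hf_prop.1 x₀)).symm
  by_contra hcon
  push_neg at hcon
  have hterm : ∀ x, f x ≠ ⊤ → f (x + y) - f x ≤ recFn f y := fun x hx =>
    le_iSup₂ (f := fun x (_ : x ∈ fdom f) => f (x + y) - f x) x hx
  have hne_top : recFn f y ≠ ⊤ := hcon.ne_top
  have hne_bot : recFn f y ≠ ⊥ := by
    intro hbot
    have h0 := hterm x₀ hx₀
    rw [hbot, le_bot_iff, hx₀r] at h0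
    rcases eq_or_ne (f (x₀ + y)) ⊤ with ht | ht
    · rw [ht, EReal.top_sub_coe] at h0
      exact (by simp : (⊤ : EReal) ≠ ⊥) h0
    · rw [← EReal.coe_toReal ht (hf_prop.1 _), ← EReal.coe_sub] at h0
      exact EReal.coe_ne_bot _ h0
  set r := (recFn f y).toReal with hr
  have hreq : recFn f y = ((r : ℝ) : EReal) := (EReal.coe_toReal hne_top hne_bot).symm
  rw [hreq, EReal.coe_lt_coe_iff] at hcon
  -- induction: f (x₀ + n • y) ≤ ρ₀ + n * r
  have hind : ∀ n : ℕ, f (x₀ + (n : ℝ) • y) ≤ ((ρ₀ + n * r : ℝ) : EReal) := by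
    intro n
    induction n with
    | zero => simp [hx₀r]
    | succ n ih =>
      have hmem : f (x₀ + (n : ℝ) • y) ≠ ⊤ := fun h => by
        rw [h] at ih; exact (EReal.coe_ne_top _) (top_le_iff.1 ih)
      set a := (f (x₀ + (n : ℝ) • y)).toReal with ha
      have har : f (x₀ + (n : ℝ) • y) = ((a : ℝ) : EReal) :=
        (EReal.coe_toReal hmem (hf_prop.1 _)).symm
      have hale : a ≤ ρ₀ + n * r := by
        rw [har, EReal.coe_le_coe_iff] at ih; exact ih
      have hstep := hterm _ hmem
      rw [hreq, har,
        EReal.sub_le_iff_le_add (Or.inr (EReal.coe_ne_top r)) (Or.inr (EReal.coe_ne_bot r))]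
        at hstep
      have h1 : x₀ + ((n : ℝ) + 1) • y = (x₀ + (n : ℝ) • y) + y := by
        rw [add_smul, one_smul, add_assoc]
      push_cast
      rw [h1]
      calc f ((x₀ + (n : ℝ) • y) + y) ≤ ((r : ℝ) : EReal) + ((a : ℝ) : EReal) := hstep
        _ ≤ ((ρ₀ + (n + 1) * r : ℝ) : EReal) := by
            rw [← EReal.coe_add, EReal.coe_le_coe_iff]
            linarith
  -- now get a contradiction for large n
  obtain ⟨n, hn⟩ := exists_nat_gt ((c + ρ₀ - ⟪x₀, u⟫_ℝ) / (⟪y, u⟫_ℝ - r))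
  have hcn := hc (x₀ + (n : ℝ) • y)
  have h2 : ((⟪x₀ + (n : ℝ) • y, u⟫_ℝ : ℝ) : EReal) ≤ ((c + (ρ₀ + n * r) : ℝ) : EReal) := by
    calc ((⟪x₀ + (n : ℝ) • y, u⟫_ℝ : ℝ) : EReal) ≤ (c : EReal) + f (x₀ + (n : ℝ) • y) := hcn
      _ ≤ (c : EReal) + ((ρ₀ + n * r : ℝ) : EReal) := by
          exact add_le_add le_rfl (hind n)
      _ = ((c + (ρ₀ + n * r) : ℝ) : EReal) := by norm_cast
  rw [EReal.coe_le_coe_iff, inner_add_left, real_inner_smul_left] at h2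
  have hd : 0 < ⟪y, u⟫_ℝ - r := by linarith
  have h3 := (div_lt_iff₀ hd).1 (lt_of_le_of_lt (le_refl _) hn)
  nlinarith

lemma convex_fdom_fconj {f : H → EReal} (hf_prop : ProperFn f) : Convex ℝ (fdom (fconj f)) := by
  intro u hu u' hu' a b ha hb hab
  set cu := (fconj f u).toReal with hcu
  set cu' := (fconj f u').toReal with hcu'
  have hur : fconj f u = ((cu : ℝ) : EReal) := (EReal.coe_toReal hu (fconj_ne_bot hf_prop u)).symm
  have hur' : fconj f u' = ((cu' : ℝ) : EReal) :=
    (EReal.coe_toReal hu' (fconj_ne_bot hf_prop u')).symm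
  have hbound : fconj f (a • u + b • u') ≤ ((a * cu + b * cu' : ℝ) : EReal) := by
    apply iSup_le
    intro x
    rcases eq_or_ne (f x) ⊤ with hfx | hfx
    · rw [hfx, EReal.sub_top]; exact bot_le
    · have hfr : f x = (((f x).toReal : ℝ) : EReal) := (EReal.coe_toReal hfx (hf_prop.1 x)).symm
      set t := (f x).toReal
      have h1 : ((⟪x, u⟫_ℝ : ℝ) : EReal) - f x ≤ fconj f u :=
        le_iSup (fun x => ((⟪x, u⟫_ℝ : ℝ) : EReal) - f x) x
      have h2 : ((⟪x, u'⟫_ℝ : ℝ) : EReal) - f x ≤ fconj f u' :=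
        le_iSup (fun x => ((⟪x, u'⟫_ℝ : ℝ) : EReal) - f x) x
      rw [hur, hfr, ← EReal.coe_sub, EReal.coe_le_coe_iff] at h1
      rw [hur', hfr, ← EReal.coe_sub, EReal.coe_le_coe_iff] at h2
      rw [hfr, ← EReal.coe_sub, EReal.coe_le_coe_iff, inner_add_right,
        real_inner_smul_right, real_inner_smul_right]
      have habt : a * t + b * t = t := by rw [← add_mul, hab, one_mul]
      nlinarith [mul_le_mul_of_nonneg_left h1 ha, mul_le_mul_of_nonneg_left h2 hb]
  intro htop
  rw [htop] at hbound
  exact (EReal.coe_ne_top _) (top_le_iff.1 hbound)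

lemma minNorm_inner {S : Set H} (hS : Convex ℝ S) {v : H} (hv : IsMinNormPoint S v)
    {w : H} (hw : w ∈ S) : 0 ≤ ⟪v, w - v⟫_ℝ := by
  by_contra hneg
  push_neg at hneg
  set d := w - v with hd
  have hdne : d ≠ 0 := fun h => by
    rw [h, inner_zero_right] at hneg
    exact lt_irrefl 0 hneg
  have hd2 : 0 < ‖d‖ ^ 2 := pow_pos (norm_pos_iff.2 hdne) 2
  set t := min 1 (-⟪v, d⟫_ℝ / ‖d‖ ^ 2) with htd
  have ht0 : 0 < t := lt_min one_pos (div_pos (by linarith) hd2)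
  have ht1 : t ≤ 1 := min_le_left _ _
  have hmem : v + t • d ∈ S := by
    have := hS hv.1 hw (by linarith : (0:ℝ) ≤ 1 - t) ht0.le (by ring)
    have heq : (1 - t) • v + t • w = v + t • d := by
      rw [hd, smul_sub]
      module
    rwa [heq] at this
  have hle := hv.2 _ hmem
  have hsq : ‖v‖ ^ 2 ≤ ‖v + t • d‖ ^ 2 := pow_le_pow_left₀ (norm_nonneg _) hle 2
  have hexp : ‖v + t • d‖ ^ 2 = ‖v‖ ^ 2 + 2 * (t * ⟪v, d⟫_ℝ) + t ^ 2 * ‖d‖ ^ 2 := by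
    rw [norm_add_sq_real, real_inner_smul_right, norm_smul, mul_pow, Real.norm_eq_abs, sq_abs]
  have hkey : t * ‖d‖ ^ 2 ≤ -⟪v, d⟫_ℝ := by
    have := min_le_right 1 (-⟪v, d⟫_ℝ / ‖d‖ ^ 2)
    exact (le_div_iff₀ hd2).1 this
  nlinarith [mul_le_mul_of_nonneg_left hkey ht0.le]

theorem douglasRachford_vD_recession_identity {H : Type*} [NormedAddCommGroup H] [InnerProductSpace ℝ H]
    [FiniteDimensional ℝ H]
    (f g : H → EReal)
    (hf_prop : ProperFn f) (hf_lsc : LowerSemicontinuous f) (hf_cvx : ConvexFn f)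
    (hg_prop : ProperFn g) (hg_lsc : LowerSemicontinuous g) (hg_cvx : ConvexFn g)
    (vD : H) (hvD : IsMinNormPoint (closure (fdom (fconj f) + fdom (fconj g))) vD)
    : recFn f (-vD) + recFn g (-vD) = ((-‖vD‖ ^ 2 : ℝ) : EReal) := by
  obtain ⟨u₀, hu₀⟩ := fdom_fconj_nonempty hf_prop hf_lsc hf_cvx
  obtain ⟨w₀, hw₀⟩ := fdom_fconj_nonempty hg_prop hg_lsc hg_cvx
  set Df := fdom (fconj f) with hDf
  set Dg := fdom (fconj g) with hDg
  have hconvD : Convex ℝ (closure (Df + Dg)) :=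
    ((convex_fdom_fconj hf_prop).add (convex_fdom_fconj hg_prop)).closure
  have hvv : ⟪vD, vD⟫_ℝ = ‖vD‖ ^ 2 := real_inner_self_eq_norm_sq vD
  have hkey : ∀ u ∈ Df, ∀ w ∈ Dg, ⟪-vD, u⟫_ℝ + ⟪-vD, w⟫_ℝ ≤ -‖vD‖ ^ 2 := by
    intro u hu w hw
    have hz : u + w ∈ closure (Df + Dg) := subset_closure (Set.add_mem_add hu hw)
    have h0 := minNorm_inner hconvD hvD hz
    rw [inner_sub_right, inner_add_right] at h0
    rw [inner_neg_left, inner_neg_left]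
    linarith
  set sf := sSup ((fun u => ⟪-vD, u⟫_ℝ) '' Df) with hsf
  set sg := sSup ((fun u => ⟪-vD, u⟫_ℝ) '' Dg) with hsg
  have hne_f : ((fun u => ⟪-vD, u⟫_ℝ) '' Df).Nonempty := ⟨_, ⟨u₀, hu₀, rfl⟩⟩
  have hne_g : ((fun u => ⟪-vD, u⟫_ℝ) '' Dg).Nonempty := ⟨_, ⟨w₀, hw₀, rfl⟩⟩
  have hbdd_f : BddAbove ((fun u => ⟪-vD, u⟫_ℝ) '' Df) := by
    refine ⟨-‖vD‖ ^ 2 - ⟪-vD, w₀⟫_ℝ, ?_⟩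
    rintro a ⟨u, hu, rfl⟩
    have := hkey u hu w₀ hw₀
    simp only
    linarith
  have hbdd_g : BddAbove ((fun u => ⟪-vD, u⟫_ℝ) '' Dg) := by
    refine ⟨-‖vD‖ ^ 2 - ⟪-vD, u₀⟫_ℝ, ?_⟩
    rintro a ⟨w, hw, rfl⟩
    have := hkey u₀ hu₀ w hw
    simp only
    linarith
  have hsg_le : ∀ u ∈ Df, sg ≤ -‖vD‖ ^ 2 - ⟪-vD, u⟫_ℝ := by
    intro u hu
    refine csSup_le hne_g ?_
    rintro a ⟨w, hw, rfl⟩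
    have := hkey u hu w hw
    linarith
  have hsum : sf + sg ≤ -‖vD‖ ^ 2 := by
    have h1 : sf ≤ -‖vD‖ ^ 2 - sg := by
      refine csSup_le hne_f ?_
      rintro a ⟨u, hu, rfl⟩
      have := hsg_le u hu
      linarith
    linarith
  have hle : recFn f (-vD) + recFn g (-vD) ≤ ((-‖vD‖ ^ 2 : ℝ) : EReal) := by
    have h1 : recFn f (-vD) ≤ (sf : EReal) :=
      recFn_le_of_bound hf_prop hf_lsc hf_cvx (fun u hu => le_csSup hbdd_f ⟨u, hu, rfl⟩)
    have h2 : recFn g (-vD) ≤ (sg : EReal) :=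
      recFn_le_of_bound hg_prop hg_lsc hg_cvx (fun w hw => le_csSup hbdd_g ⟨w, hw, rfl⟩)
    calc recFn f (-vD) + recFn g (-vD) ≤ (sf : EReal) + (sg : EReal) := add_le_add h1 h2
      _ = ((sf + sg : ℝ) : EReal) := (EReal.coe_add _ _).symm
      _ ≤ ((-‖vD‖ ^ 2 : ℝ) : EReal) := EReal.coe_le_coe_iff.2 hsum
  have hge : ((-‖vD‖ ^ 2 : ℝ) : EReal) ≤ recFn f (-vD) + recFn g (-vD) := by
    refine EReal.ge_of_forall_gt_iff_ge.1 fun z hz => ?_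
    rw [EReal.coe_lt_coe_iff] at hz
    have hδpos : 0 < (-‖vD‖ ^ 2 - z) / (‖vD‖ + 1) := by
      apply div_pos (by linarith)
      positivity
    obtain ⟨p, hpS, hpd⟩ := Metric.mem_closure_iff.1 hvD.1 _ hδpos
    obtain ⟨u, hu, w, hw, rfl⟩ := Set.mem_add.1 hpS
    have hip : z ≤ ⟪-vD, u + w⟫_ℝ := by
      rw [dist_eq_norm] at hpd
      have i1 : ⟪vD, (u + w) - vD⟫_ℝ ≤ ‖vD‖ * ‖(u + w) - vD‖ := real_inner_le_norm _ _
      have i2 : ‖(u + w) - vD‖ = ‖vD - (u + w)‖ := norm_sub_rev _ _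
      have i3 : ⟪vD, (u + w) - vD⟫_ℝ = ⟪vD, u + w⟫_ℝ - ‖vD‖ ^ 2 := by
        rw [inner_sub_right, hvv]
      have i4 : ((-‖vD‖ ^ 2 - z) / (‖vD‖ + 1)) * (‖vD‖ + 1) = -‖vD‖ ^ 2 - z := by
        field_simp
      rw [inner_neg_left]
      nlinarith [mul_le_mul_of_nonneg_left (i2 ▸ hpd.le) (norm_nonneg vD), norm_nonneg vD,
        mul_nonneg (norm_nonneg vD) (norm_nonneg ((u + w) - vD))]
    calc (z : EReal) ≤ ((⟪-vD, u⟫_ℝ + ⟪-vD, w⟫_ℝ : ℝ) : EReal) := by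
          rw [EReal.coe_le_coe_iff, ← inner_add_right]
          exact hip
      _ = ((⟪-vD, u⟫_ℝ : ℝ) : EReal) + ((⟪-vD, w⟫_ℝ : ℝ) : EReal) := EReal.coe_add _ _
      _ ≤ recFn f (-vD) + recFn g (-vD) :=
          add_le_add (inner_le_recFn hf_prop hu (-vD)) (inner_le_recFn hg_prop hw (-vD))
  exact le_antisymm hle hge

end
end

section
/- The vector -v_P belongs to (rec(cl dom f))° ∩ (rec(-cl dom g))°, i.e., -v_P lies in the polar cone of the recession cone of cl(dom f) and in the polar cone of the recession cone of -cl(dom g). -/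
open scoped InnerProductSpace Pointwise Classical
open Filter Topology

noncomputable section

variable {H : Type*} [NormedAddCommGroup H] [InnerProductSpace ℝ H]

lemma fdom_convex {H : Type*} [NormedAddCommGroup H] [InnerProductSpace ℝ H]
    {f : H → EReal} (hp : ProperFn f) (hc : ConvexFn f) :
    Convex ℝ (fdom f) := by
  intro x hx y hy a b ha hb hab
  have hxr : ((f x).toReal : EReal) = f x := EReal.coe_toReal hx (hp.1 x)
  have hyr : ((f y).toReal : EReal) = f y := EReal.coe_toReal hy (hp.1 y)
  have hmx : (x, (f x).toReal) ∈ {p : H × ℝ | f p.1 ≤ (p.2 : EReal)} := by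
    simp [hxr]
  have hmy : (y, (f y).toReal) ∈ {p : H × ℝ | f p.1 ≤ (p.2 : EReal)} := by
    simp [hyr]
  have := hc hmx hmy ha hb hab
  simp only [Prod.smul_mk, Prod.mk_add_mk, Set.mem_setOf_eq] at this
  intro hT
  rw [hT] at this
  exact (EReal.coe_ne_top _) (top_le_iff.mp this)

lemma minnorm_inner_nonneg {H : Type*} [NormedAddCommGroup H] [InnerProductSpace ℝ H]
    {C : Set H} (hC : Convex ℝ C) {v x : H}
    (hv : IsMinNormPoint C v) (hx : x + v ∈ C) : 0 ≤ ⟪x, v⟫_ℝ := by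
  by_contra h
  push_neg at h
  have hx0 : x ≠ 0 := by
    rintro rfl; simp at h
  have hnx : (0:ℝ) < ‖x‖ ^ 2 := by
    have := norm_pos_iff.mpr hx0
    positivity
  set t : ℝ := min 1 (-⟪x, v⟫_ℝ / ‖x‖ ^ 2) with ht
  have ht0 : 0 < t := lt_min one_pos (div_pos (by linarith) hnx)
  have ht1 : t ≤ 1 := min_le_left _ _
  have ht2 : t * ‖x‖ ^ 2 ≤ -⟪x, v⟫_ℝ := by
    rw [← div_mul_cancel₀ (-⟪x, v⟫_ℝ) (ne_of_gt hnx)]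
    exact mul_le_mul_of_nonneg_right (min_le_right _ _) (le_of_lt hnx)
  have hmem : v + t • x ∈ C := by
    have := hC hv.1 hx (by linarith : (0:ℝ) ≤ 1 - t) (le_of_lt ht0) (by ring)
    have heq : (1 - t) • v + t • (x + v) = v + t • x := by
      module
    rwa [heq] at this
  have hle := hv.2 _ hmem
  have hsq : ‖v + t • x‖ ^ 2 = ‖v‖ ^ 2 + 2 * (t * ⟪v, x⟫_ℝ) + t ^ 2 * ‖x‖ ^ 2 := by
    rw [norm_add_sq_real, real_inner_smul_right, norm_smul]
    rw [Real.norm_eq_abs, mul_pow, sq_abs]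
  have hle2 : ‖v‖ ^ 2 ≤ ‖v + t • x‖ ^ 2 := by
    apply pow_le_pow_left₀ (norm_nonneg _) hle
  rw [real_inner_comm x v] at hsq
  nlinarith

lemma add_mem_closure_sub {H : Type*} [NormedAddCommGroup H]
    {A B : Set H} {x v : H}
    (h : ∀ a ∈ A, ∀ b ∈ B, x + (a - b) ∈ closure (A - B))
    (hv : v ∈ closure (A - B)) : x + v ∈ closure (A - B) := by
  have hcont : Continuous fun y : H => x + y := continuous_const.add continuous_id
  have h1 : (fun y : H => x + y) '' (A - B) ⊆ closure (A - B) := by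
    rintro _ ⟨w, hw, rfl⟩
    rw [Set.mem_sub] at hw
    obtain ⟨a, ha, b, hb, rfl⟩ := hw
    exact h a ha b hb
  have h2 : x + v ∈ closure ((fun y : H => x + y) '' (A - B)) := by
    have := image_closure_subset_closure_image hcont (s := A - B)
    exact this ⟨v, hv, rfl⟩
  exact closure_minimal h1 isClosed_closure h2

lemma sub_mem_closure_sub {H : Type*} [NormedAddCommGroup H]
    {A B : Set H} {a b : H}
    (ha : a ∈ closure A) (hb : b ∈ closure B) : a - b ∈ closure (A - B) :=
  map_mem_closure₂ continuous_sub ha hb fun p hp q hq => Set.sub_mem_sub hp hq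

theorem neg_vP_mem_polar_recCones {H : Type*} [NormedAddCommGroup H] [InnerProductSpace ℝ H]
    [FiniteDimensional ℝ H]
    (f g : H → EReal)
    (hf_prop : ProperFn f) (hf_lsc : LowerSemicontinuous f) (hf_cvx : ConvexFn f)
    (hg_prop : ProperFn g) (hg_lsc : LowerSemicontinuous g) (hg_cvx : ConvexFn g)
    (vP : H) (hvP : IsMinNormPoint (closure (fdom f - fdom g)) vP)
    : -vP ∈ polarCone (recCone (closure (fdom f))) ∩ polarCone (recCone (-closure (fdom g))) := by
  have hC : Convex ℝ (closure (fdom f - fdom g)) :=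
    (Convex.sub (fdom_convex hf_prop hf_cvx) (fdom_convex hg_prop hg_cvx)).closure
  constructor
  · intro x hx
    rw [inner_neg_right, neg_nonpos]
    apply minnorm_inner_nonneg hC hvP
    apply add_mem_closure_sub ?_ hvP.1
    intro a ha b hb
    have hxa : x + a ∈ closure (fdom f) := hx a (subset_closure ha)
    have : (x + a) - b ∈ closure (fdom f - fdom g) :=
      sub_mem_closure_sub hxa (subset_closure hb)
    rwa [show x + (a - b) = (x + a) - b by abel]
  · intro x hx
    rw [inner_neg_right, neg_nonpos]
    apply minnorm_inner_nonneg hC hvP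
    apply add_mem_closure_sub ?_ hvP.1
    intro a ha b hb
    have hb' : -b ∈ -closure (fdom g) := Set.neg_mem_neg.mpr (subset_closure hb)
    have hxb : x + -b ∈ -closure (fdom g) := hx (-b) hb'
    have hbx : b - x ∈ closure (fdom g) := by
      have := Set.mem_neg.mp hxb
      rwa [show -(x + -b) = b - x by abel] at this
    have : a - (b - x) ∈ closure (fdom f - fdom g) :=
      sub_mem_closure_sub (subset_closure ha) hbx
    rwa [show x + (a - b) = a - (b - x) by abel]


end
end
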